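/- arXiv:1011.1449 — 2 statements merged into one kernel-verified Lean document; each statement's English description precedes it below -/
import Mathlib

section
/- Let n > 0 and let k ≥ 1 be an odd integer. Then there exist no real number A ≠ 0 and no real exponent m such that the function Y(y) = A·y^m satisfies (−1)^{k+1}·Y^{(2k)}(y) + (1/((2k+1)+n))·y·N_n(Y(y)) = 0 for all y > 0. In other words, for odd k the equation admits no non-oscillatory pure power solutions on (0, ∞). -/
/-- The odd power nonlinearity `N_n(Y) = |Y|^{-n/(n+1)}·Y` (with `N_n(0) = 0`). -/
noncomputable def Nn (n Y : ℝ) : ℝ := |Y| ^ (-(n / (n + 1))) * Y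

lemma iter_rpow (A m : ℝ) : ∀ (j : ℕ) (y : ℝ), 0 < y →
    iteratedDeriv j (fun t : ℝ => A * t ^ m) y
      = (A * ∏ i ∈ Finset.range j, (m - i)) * y ^ (m - j) := by
  intro j
  induction j with
  | zero => intro y hy; simp
  | succ j ih =>
    intro y hy
    rw [iteratedDeriv_succ]
    have hEq : (iteratedDeriv j (fun t : ℝ => A * t ^ m)) =ᶠ[nhds y]
        (fun t => (A * ∏ i ∈ Finset.range j, (m - i)) * t ^ (m - j)) := by
      filter_upwards [IsOpen.mem_nhds isOpen_Ioi hy] with t ht using ih t ht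
    rw [hEq.deriv_eq]
    have hd : HasDerivAt (fun t : ℝ => t ^ (m - j)) ((m - j) * y ^ (m - j - 1)) y :=
      Real.hasDerivAt_rpow_const (Or.inl (ne_of_gt hy))
    rw [deriv_const_mul _ hd.differentiableAt, hd.deriv, Finset.prod_range_succ]
    have : m - (j + 1 : ℕ) = m - j - 1 := by push_cast; ring
    rw [this]
    ring

/-- For `n > 0` and odd `k ≥ 1` there are no `A ≠ 0` and real
exponent `m` such that `Y(y) = A·y^m` solves
`(-1)^{k+1} Y^{(2k)} + (1/((2k+1)+n))·y·N_n(Y) = 0` on `(0, ∞)`: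
for odd `k` the equation has no non-oscillatory pure power solutions. -/
theorem stmt5 (n : ℝ) (hn : 0 < n) (k : ℕ) (hk : 1 ≤ k) (hko : Odd k) :
    ¬ ∃ (A m : ℝ), A ≠ 0 ∧
      ∀ y : ℝ, 0 < y →
        (-1 : ℝ) ^ (k + 1) * iteratedDeriv (2 * k) (fun t : ℝ => A * t ^ m) y
          + (1 / (2 * (k : ℝ) + 1 + n)) * y * Nn n (A * y ^ m) = 0 := by
  rintro ⟨A, m, hA, H⟩
  have hsign : ((-1 : ℝ)) ^ (k + 1) = 1 := by
    rcases hko with ⟨j, rfl⟩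
    rw [show 2 * j + 1 + 1 = 2 * (j + 1) by ring, pow_mul]
    norm_num
  set α : ℝ := n / (n + 1) with hα
  have hα0 : 0 < α := div_pos hn (by linarith)
  have hα1 : α < 1 := by
    rw [hα, div_lt_one (by linarith)]; linarith
  set c : ℝ := 1 / (2 * (k : ℝ) + 1 + n) with hc
  have hc0 : 0 < c := by
    apply one_div_pos.mpr
    have : (1 : ℝ) ≤ (k : ℝ) := by exact_mod_cast hk
    linarith
  set P : ℝ := ∏ i ∈ Finset.range (2 * k), (m - i) with hP
  set b : ℝ := c * (|A| ^ (-α) * A) with hb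
  have hb0 : b ≠ 0 := by
    have : (0:ℝ) < |A| ^ (-α) := Real.rpow_pos_of_pos (abs_pos.mpr hA) _
    intro h
    rcases mul_eq_zero.mp h with h | h
    · exact absurd h (ne_of_gt hc0)
    · rcases mul_eq_zero.mp h with h | h
      · exact absurd h (ne_of_gt this)
      · exact hA h
  -- rewrite the equation as a power identity
  have key : ∀ y : ℝ, 0 < y →
      (A * P) * y ^ (m - (2 * k : ℕ)) + b * y ^ (m - m * α + 1) = 0 := by
    intro y hy
    have h := H y hy
    rw [iter_rpow A m (2 * k) y hy, hsign, one_mul] at h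
    have hym : (0:ℝ) < y ^ m := Real.rpow_pos_of_pos hy m
    have hNn : Nn n (A * y ^ m) = |A| ^ (-α) * A * y ^ (m - m * α) := by
      unfold Nn
      rw [abs_mul, abs_of_pos hym,
        Real.mul_rpow (abs_nonneg A) (le_of_lt hym)]
      have hpy : (y ^ m) ^ (-(n / (n + 1))) = y ^ (-(m * α)) := by
        rw [← Real.rpow_mul (le_of_lt hy)]
        congr 1
        rw [hα]; ring
      rw [hpy, show m - m * α = -(m * α) + m by ring, Real.rpow_add hy]
      ring
    rw [hNn] at h
    have hy1 : y * y ^ (m - m * α) = y ^ (m - m * α + 1) := by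
      rw [Real.rpow_add hy, Real.rpow_one]; ring
    calc (A * P) * y ^ (m - (2 * k : ℕ)) + b * y ^ (m - m * α + 1)
        = (A * P) * y ^ (m - (2 * k : ℕ))
          + c * y * (|A| ^ (-α) * A * y ^ (m - m * α)) := by
          rw [hb, ← hy1]; ring
      _ = 0 := h
  -- evaluate at y = 1 and y = 2
  have h1 := key 1 one_pos
  simp only [Real.one_rpow, mul_one] at h1
  have hAP : A * P = -b := by linarith
  have h2 := key 2 two_pos
  rw [hAP] at h2
  have hexp : m - (2 * k : ℕ) = m - m * α + 1 := by
    have h2' : b * ((2:ℝ) ^ (m - m * α + 1) - (2:ℝ) ^ (m - (2 * k : ℕ))) = 0 := by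
      ring_nf at h2 ⊢; linarith
    have := (mul_eq_zero.mp h2').resolve_left hb0
    have heq : (2:ℝ) ^ (m - (2 * k : ℕ)) = (2:ℝ) ^ (m - m * α + 1) := by linarith
    have hlog := congrArg Real.log heq
    rw [Real.log_rpow two_pos, Real.log_rpow two_pos] at hlog
    have hl2 : Real.log 2 ≠ 0 := by
      simpa using Real.log_ne_zero_of_pos_of_ne_one two_pos (by norm_num)
    exact mul_right_cancel₀ hl2 hlog
  -- hence m * α = 2k + 1
  have hm : m * α = 2 * (k : ℕ) + 1 := by
    have : (m - (2 * k : ℕ)) - (m - m * α + 1) = 0 := by rw [hexp]; ring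
    push_cast at this ⊢
    linarith
  have hm' : m = (2 * (k : ℝ) + 1) * (n + 1) / n := by
    have hαne : α ≠ 0 := ne_of_gt hα0
    field_simp [hα] at hm ⊢
    push_cast at hm
    have hαn : α * (n + 1) = n := by rw [hα]; exact div_mul_cancel₀ n (by linarith)
    have e1 : m * α * (n + 1) = (2 * (k : ℝ) + 1) * (n + 1) := by rw [hm]
    have e2 : m * (α * (n + 1)) = m * n := by rw [hαn]
    linarith [e1, e2]
  -- P > 0 since m > 2k ≥ i for all i in range
  have hPpos : 0 < P := by
    apply Finset.prod_pos
    intro i hi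
    have hi' : (i : ℝ) < 2 * k := by
      have := Finset.mem_range.mp hi
      exact_mod_cast this
    have hk1 : (1:ℝ) ≤ (k:ℝ) := by exact_mod_cast hk
    have hmgt : (2 * (k : ℝ) + 1) < m := by
      rw [hm']
      rw [lt_div_iff₀ hn]
      nlinarith
    linarith
  -- b has the same sign as A, so A * P = -b gives contradiction
  have hbA : 0 < b / A := by
    have h1 : (0:ℝ) < |A| ^ (-α) := Real.rpow_pos_of_pos (abs_pos.mpr hA) _
    have : b / A = c * |A| ^ (-α) := by
      field_simp [hb]
      ring
    rw [this]
    positivity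
  have hPA : P = -(b / A) := by
    field_simp
    linear_combination hAP
  rw [hPA] at hPpos
  linarith
end

section
/- Define T1(y) = −(1/3)(y+1)²(y − 1/2). Then T1(−1) = 0, T1'(−1) = 0, T1'(0) = 0, T1 > 0 on (−1, 1/2), and y·T1''(y) − T1'(y) + y² = 0 for all y. Moreover, for z > 1/2 define T2(y) = (y − 1/2)(y − z)·( y/3 + z/(3(1+2z)) ). Then y·T2''(y) − T2'(y) − y² = 0 for all y, T2(1/2) = T2(z) = 0, and the C¹ matching condition T1'(1/2) = T2'(1/2) holds if and only if 4z² − 10z − 5 = 0; the unique positive root of this quadratic is z = (5 + 3√5)/4. Hence the first two zeros after the interface of the second limit nonlinear eigenfunction are y_1 = 1/2 and y_2 = (5 + 3√5)/4. -/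
private lemma deriv_cubic (a b c d : ℝ) :
    deriv (fun y : ℝ => a * y ^ 3 + b * y ^ 2 + c * y + d) =
      fun y => 3 * a * y ^ 2 + 2 * b * y + c := by
  funext y
  have h3 : HasDerivAt (fun y : ℝ => y ^ 3) (3 * y ^ 2) y := by
    simpa using hasDerivAt_pow 3 y
  have h2 : HasDerivAt (fun y : ℝ => y ^ 2) (2 * y) y := by
    simpa using hasDerivAt_pow 2 y
  have h1 : HasDerivAt (fun y : ℝ => y) 1 y := hasDerivAt_id y
  have h := (((h3.const_mul a).add (h2.const_mul b)).add (h1.const_mul c)).add_const d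
  have h' : HasDerivAt (fun y : ℝ => a * y ^ 3 + b * y ^ 2 + c * y + d)
      (3 * a * y ^ 2 + 2 * b * y + c) y := by
    exact h.congr_deriv (by ring)
  exact h'.deriv

private lemma deriv_quad (a b c : ℝ) :
    deriv (fun y : ℝ => a * y ^ 2 + b * y + c) = fun y => 2 * a * y + b := by
  funext y
  have h2 : HasDerivAt (fun y : ℝ => y ^ 2) (2 * y) y := by
    simpa using hasDerivAt_pow 2 y
  have h1 : HasDerivAt (fun y : ℝ => y) 1 y := hasDerivAt_id y
  have h := ((h2.const_mul a).add (h1.const_mul b)).add_const c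
  have h' : HasDerivAt (fun y : ℝ => a * y ^ 2 + b * y + c) (2 * a * y + b) y := by
    exact h.congr_deriv (by ring)
  exact h'.deriv

/-- First two arcs of the second limit nonlinear
eigenfunction (`k = 1`, `l = 1`, equation `y·Ỹ'' - Ỹ' + sign(Ỹ)·y² = 0`):
`T1(y) = -(1/3)(y+1)²(y - 1/2)` satisfies the interface and singular-point
conditions and the positive-arc equation, while for `z > 1/2` the arc
`T2(y) = (y - 1/2)(y - z)(y/3 + z/(3(1+2z)))` satisfies the negative-arc
equation, vanishes at `1/2` and `z`, and C¹-matches `T1` at `1/2` iff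
`4z² - 10z - 5 = 0`, whose unique positive root is `z = (5 + 3√5)/4`. -/
theorem stmt15 :
    let T1 : ℝ → ℝ := fun y => -(1 / 3) * (y + 1) ^ 2 * (y - 1 / 2)
    T1 (-1) = 0 ∧
    deriv T1 (-1) = 0 ∧
    deriv T1 0 = 0 ∧
    (∀ y ∈ Set.Ioo (-1 : ℝ) (1 / 2 : ℝ), 0 < T1 y) ∧
    (∀ y : ℝ, y * deriv (deriv T1) y - deriv T1 y + y ^ 2 = 0) ∧
    (∀ z : ℝ, 1 / 2 < z →
      let T2 : ℝ → ℝ := fun y =>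
        (y - 1 / 2) * (y - z) * (y / 3 + z / (3 * (1 + 2 * z)))
      (∀ y : ℝ, y * deriv (deriv T2) y - deriv T2 y - y ^ 2 = 0) ∧
      T2 (1 / 2) = 0 ∧ T2 z = 0 ∧
      (deriv T1 (1 / 2) = deriv T2 (1 / 2) ↔
        4 * z ^ 2 - 10 * z - 5 = 0)) ∧
    (∀ z : ℝ, 0 < z →
      (4 * z ^ 2 - 10 * z - 5 = 0 ↔ z = (5 + 3 * Real.sqrt 5) / 4)) := by
  intro T1
  have eT1 : T1 = fun y : ℝ => -(1/3) * y ^ 3 + -(1/2) * y ^ 2 + 0 * y + 1/6 := by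
    funext y; show -(1 / 3) * (y + 1) ^ 2 * (y - 1 / 2) = _; ring
  have dT1 : deriv T1 = fun y : ℝ => 3 * (-(1/3)) * y ^ 2 + 2 * (-(1/2)) * y + 0 := by
    rw [eT1, deriv_cubic]
  have dT1' : deriv T1 = fun y : ℝ => -1 * y ^ 2 + -1 * y + 0 := by
    rw [dT1]; norm_num
  have ddT1 : deriv (deriv T1) = fun y : ℝ => 2 * (-1) * y + -1 := by
    rw [dT1', deriv_quad]
  refine ⟨by show -(1/3) * ((-1:ℝ) + 1) ^ 2 * ((-1:ℝ) - 1/2) = 0; ring,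
    by rw [dT1']; norm_num, by rw [dT1']; norm_num, ?_, ?_, ?_, ?_⟩
  · intro y hy
    obtain ⟨h1, h2⟩ := hy
    show 0 < -(1 / 3) * (y + 1) ^ 2 * (y - 1 / 2)
    have hp : 0 < y + 1 := by linarith
    nlinarith [sq_nonneg (y + 1), mul_pos (mul_pos hp hp) (show 0 < 1/2 - y by linarith)]
  · intro y
    rw [ddT1, dT1']; ring
  · intro z hz
    intro T2
    have hz0 : (1 : ℝ) + 2 * z ≠ 0 := by linarith
    set B : ℝ := z / (3 * (1 + 2 * z)) - (2 * z + 1) / 6 with hB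
    have eT2 : T2 = fun y : ℝ => (1/3) * y ^ 3 + B * y ^ 2 + 0 * y + z ^ 2 / (6 * (1 + 2 * z)) := by
      funext y
      show (y - 1 / 2) * (y - z) * (y / 3 + z / (3 * (1 + 2 * z))) = _
      rw [hB]; field_simp; ring
    have dT2 : deriv T2 = fun y : ℝ => 3 * (1/3) * y ^ 2 + 2 * B * y + 0 := by
      rw [eT2, deriv_cubic]
    have ddT2 : deriv (deriv T2) = fun y : ℝ => 2 * (3 * (1/3)) * y + 2 * B := by
      rw [dT2, deriv_quad]
    refine ⟨?_, ?_, ?_, ?_⟩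
    · intro y; rw [ddT2, dT2]; ring
    · show ((1:ℝ)/2 - 1 / 2) * (1/2 - z) * (1/2 / 3 + z / (3 * (1 + 2 * z))) = 0; ring
    · show (z - 1 / 2) * (z - z) * (z / 3 + z / (3 * (1 + 2 * z))) = 0; ring
    · rw [dT1', dT2]
      have hv1 : -1 * ((1:ℝ)/2) ^ 2 + -1 * (1/2) + 0 = -(3/4) := by norm_num
      constructor
      · intro h
        simp only at h
        rw [hB] at h
        field_simp at h
        nlinarith [h]
      · intro h
        simp only
        rw [hB]
        field_simp
        nlinarith [h]
  · intro z hz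
    have hs : Real.sqrt 5 ^ 2 = 5 := Real.sq_sqrt (by norm_num)
    have hs2 : (2 : ℝ) < Real.sqrt 5 := by
      nlinarith [Real.sqrt_nonneg 5]
    constructor
    · intro h
      have key : (4 * z - 5 - 3 * Real.sqrt 5) * (4 * z - 5 + 3 * Real.sqrt 5) = 0 := by
        linear_combination 4 * h - 9 * hs
      have hpos : 0 < 4 * z - 5 + 3 * Real.sqrt 5 := by nlinarith
      have h1 : 4 * z - 5 - 3 * Real.sqrt 5 = 0 := by
        rcases mul_eq_zero.mp key with h' | h'
        · exact h'
        · linarith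
      linarith
    · intro h
      rw [h]
      linear_combination (9/4) * hs
end
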